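/- arXiv:2108.03677 — 2 statements merged into one kernel-verified Lean document; each statement's English description precedes it below -/
import Mathlib

section
/- Let Λ ⊆ ℝ be a finite set with Λ ⊆ (-∞, 1]. Let M(Λ) be the set of all real numbers m for which there exist linearly independent primitive vectors v₁, v₂ ∈ ℤ², elements b₁, b₂ ∈ Λ, and the (unique) linear functional L : ℝ² → ℝ with L(v₁) = 1 − b₁ and L(v₂) = 1 − b₂, such that m = inf { L(u) : u ∈ ℤ², u = a·v₁ + b·v₂ with a > 0 and b > 0 real }. Then the set of accumulation points of M(Λ) only accumulates to zero; that is, every accumulation point of the set of accumulation points of M(Λ) equals 0. -/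
/-- The coercion of an integer vector in `ℤ × ℤ` to `ℝ × ℝ`. -/
def vecR (v : ℤ × ℤ) : ℝ × ℝ := ((v.1 : ℝ), (v.2 : ℝ))

/-- The determinant of the 2×2 integer matrix with columns `v` and `w`. -/
def det2 (v w : ℤ × ℤ) : ℤ := v.1 * w.2 - v.2 * w.1

/-- The relative interior of the cone spanned by the integer vectors `v` and `w`. -/
def relintR (v w : ℤ × ℤ) : Set (ℝ × ℝ) :=
  {x | ∃ a b : ℝ, 0 < a ∧ 0 < b ∧ x = a • vecR v + b • vecR w}

/-- The set of minimal log discrepancies of toric surface pairs with torus-invariant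
boundary coefficients in `Λ`: real numbers `m` arising as the infimum of a linear
functional `L`, with `L v₁ = 1 - b₁` and `L v₂ = 1 - b₂` for `b₁, b₂ ∈ Λ`, over the
lattice points in the relative interior of the cone spanned by linearly independent
primitive vectors `v₁, v₂ ∈ ℤ²`. -/
def toricSurfaceMlds (Λ : Set ℝ) : Set ℝ :=
  {m : ℝ | ∃ (v₁ v₂ : ℤ × ℤ) (b₁ b₂ : ℝ) (L : ℝ × ℝ →ₗ[ℝ] ℝ),
    IsCoprime v₁.1 v₁.2 ∧ IsCoprime v₂.1 v₂.2 ∧ det2 v₁ v₂ ≠ 0 ∧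
    b₁ ∈ Λ ∧ b₂ ∈ Λ ∧
    L (vecR v₁) = 1 - b₁ ∧ L (vecR v₂) = 1 - b₂ ∧
    m = sInf {r : ℝ | ∃ u : ℤ × ℤ, vecR u ∈ relintR v₁ v₂ ∧ r = L (vecR u)}}

noncomputable def dR (v₁ v₂ : ℤ × ℤ) : ℝ := ((det2 v₁ v₂ : ℤ) : ℝ)
noncomputable def ac (v₁ v₂ u : ℤ × ℤ) : ℝ :=
  ((u.1 * v₂.2 - u.2 * v₂.1 : ℤ) : ℝ) / dR v₁ v₂
noncomputable def bc (v₁ v₂ u : ℤ × ℤ) : ℝ :=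
  ((v₁.1 * u.2 - v₁.2 * u.1 : ℤ) : ℝ) / dR v₁ v₂

section datum
variable {v₁ v₂ : ℤ × ℤ} (hD : det2 v₁ v₂ ≠ 0)

lemma dR_ne (hD : det2 v₁ v₂ ≠ 0) : dR v₁ v₂ ≠ 0 := by
  simpa [dR] using hD

lemma vec_decomp (hD : det2 v₁ v₂ ≠ 0) (u : ℤ × ℤ) :
    vecR u = ac v₁ v₂ u • vecR v₁ + bc v₁ v₂ u • vecR v₂ := by
  have h := dR_ne hD
  have hd : dR v₁ v₂ = ((v₁.1 : ℝ) * (v₂.2 : ℝ) - (v₁.2 : ℝ) * (v₂.1 : ℝ)) := by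
    simp only [dR, det2]; push_cast; ring
  ext
  · show (u.1 : ℝ) = ac v₁ v₂ u * (v₁.1 : ℝ) + bc v₁ v₂ u * (v₂.1 : ℝ)
    rw [ac, bc]
    field_simp
    rw [hd]; push_cast; ring
  · show (u.2 : ℝ) = ac v₁ v₂ u * (v₁.2 : ℝ) + bc v₁ v₂ u * (v₂.2 : ℝ)
    rw [ac, bc]
    field_simp
    rw [hd]; push_cast; ring

lemma coord_eq (hD : det2 v₁ v₂ ≠ 0) {a b : ℝ} {u : ℤ × ℤ}
    (h : vecR u = a • vecR v₁ + b • vecR v₂) :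
    a = ac v₁ v₂ u ∧ b = bc v₁ v₂ u := by
  have h1 : (u.1 : ℝ) = a * (v₁.1 : ℝ) + b * (v₂.1 : ℝ) := congrArg Prod.fst h
  have h2 : (u.2 : ℝ) = a * (v₁.2 : ℝ) + b * (v₂.2 : ℝ) := congrArg Prod.snd h
  have hne := dR_ne hD
  have hd : dR v₁ v₂ = ((v₁.1 : ℝ) * (v₂.2 : ℝ) - (v₁.2 : ℝ) * (v₂.1 : ℝ)) := by
    simp only [dR, det2]; push_cast; ring
  constructor
  · rw [ac]; rw [eq_div_iff hne, hd]; push_cast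
    linear_combination (v₂.1 : ℝ) * h2 - (v₂.2 : ℝ) * h1
  · rw [bc]; rw [eq_div_iff hne, hd]; push_cast
    linear_combination (v₁.2 : ℝ) * h1 - (v₁.1 : ℝ) * h2

lemma mem_relint_iff (hD : det2 v₁ v₂ ≠ 0) (u : ℤ × ℤ) :
    vecR u ∈ relintR v₁ v₂ ↔ 0 < ac v₁ v₂ u ∧ 0 < bc v₁ v₂ u := by
  constructor
  · rintro ⟨a, b, ha, hb, heq⟩
    obtain ⟨ha', hb'⟩ := coord_eq hD heq
    exact ⟨ha' ▸ ha, hb' ▸ hb⟩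
  · rintro ⟨ha, hb⟩
    exact ⟨_, _, ha, hb, vec_decomp hD u⟩

variable {b₁ b₂ : ℝ} {L : ℝ × ℝ →ₗ[ℝ] ℝ}

lemma L_val (hD : det2 v₁ v₂ ≠ 0) (hL1 : L (vecR v₁) = 1 - b₁) (hL2 : L (vecR v₂) = 1 - b₂) (u : ℤ × ℤ) :
    L (vecR u) = ac v₁ v₂ u * (1 - b₁) + bc v₁ v₂ u * (1 - b₂) := by
  rw [vec_decomp hD u, map_add, map_smul, map_smul, hL1, hL2]
  simp [smul_eq_mul]

/-- The key "combination" lemma for the first coordinate. -/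
lemma ac_combo (hD : det2 v₁ v₂ ≠ 0) (u : ℤ × ℤ) (j s t : ℤ) :
    ac v₁ v₂ (j * u.1 + s * v₁.1 + t * v₂.1, j * u.2 + s * v₁.2 + t * v₂.2)
      = j * ac v₁ v₂ u + s := by
  have hne := dR_ne hD
  have hd : dR v₁ v₂ = ((v₁.1 : ℝ) * (v₂.2 : ℝ) - (v₁.2 : ℝ) * (v₂.1 : ℝ)) := by
    simp only [dR, det2]; push_cast; ring
  rw [ac, ac]
  field_simp
  rw [hd]; push_cast; ring

lemma bc_combo (hD : det2 v₁ v₂ ≠ 0) (u : ℤ × ℤ) (j s t : ℤ) :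
    bc v₁ v₂ (j * u.1 + s * v₁.1 + t * v₂.1, j * u.2 + s * v₁.2 + t * v₂.2)
      = j * bc v₁ v₂ u + t := by
  have hne := dR_ne hD
  have hd : dR v₁ v₂ = ((v₁.1 : ℝ) * (v₂.2 : ℝ) - (v₁.2 : ℝ) * (v₂.1 : ℝ)) := by
    simp only [dR, det2]; push_cast; ring
  rw [bc, bc]
  field_simp
  rw [hd]; push_cast; ring

end datum

/-- integer combination point -/
def ptc (v₁ v₂ u : ℤ × ℤ) (j s t : ℤ) : ℤ × ℤ :=
  (j * u.1 + s * v₁.1 + t * v₂.1, j * u.2 + s * v₁.2 + t * v₂.2)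

noncomputable def Sv (v₁ v₂ : ℤ × ℤ) (L : ℝ × ℝ →ₗ[ℝ] ℝ) : Set ℝ :=
  {r : ℝ | ∃ u : ℤ × ℤ, vecR u ∈ relintR v₁ v₂ ∧ r = L (vecR u)}

section datum2
variable {v₁ v₂ : ℤ × ℤ} {b₁ b₂ : ℝ} {L : ℝ × ℝ →ₗ[ℝ] ℝ}

lemma ac_ptc (hD : det2 v₁ v₂ ≠ 0) (u : ℤ × ℤ) (j s t : ℤ) :
    ac v₁ v₂ (ptc v₁ v₂ u j s t) = j * ac v₁ v₂ u + s := ac_combo hD u j s t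

lemma bc_ptc (hD : det2 v₁ v₂ ≠ 0) (u : ℤ × ℤ) (j s t : ℤ) :
    bc v₁ v₂ (ptc v₁ v₂ u j s t) = j * bc v₁ v₂ u + t := bc_combo hD u j s t

lemma S_char (hD : det2 v₁ v₂ ≠ 0) (hL1 : L (vecR v₁) = 1 - b₁)
    (hL2 : L (vecR v₂) = 1 - b₂) (r : ℝ) :
    r ∈ Sv v₁ v₂ L ↔ ∃ u : ℤ × ℤ, 0 < ac v₁ v₂ u ∧ 0 < bc v₁ v₂ u ∧
      r = ac v₁ v₂ u * (1 - b₁) + bc v₁ v₂ u * (1 - b₂) := by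
  constructor
  · rintro ⟨u, hu, hr⟩
    obtain ⟨ha, hb⟩ := (mem_relint_iff hD u).1 hu
    exact ⟨u, ha, hb, by rw [hr, L_val hD hL1 hL2]⟩
  · rintro ⟨u, ha, hb, hr⟩
    exact ⟨u, (mem_relint_iff hD u).2 ⟨ha, hb⟩, by rw [hr, L_val hD hL1 hL2]⟩

lemma S_nonneg (hD : det2 v₁ v₂ ≠ 0) (hL1 : L (vecR v₁) = 1 - b₁)
    (hL2 : L (vecR v₂) = 1 - b₂) (hb1 : b₁ ≤ 1) (hb2 : b₂ ≤ 1) :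
    ∀ r ∈ Sv v₁ v₂ L, 0 ≤ r := by
  intro r hr
  obtain ⟨u, ha, hb, hr⟩ := (S_char hD hL1 hL2 r).1 hr
  have : (0:ℝ) ≤ 1 - b₁ := by linarith
  have : (0:ℝ) ≤ 1 - b₂ := by linarith
  rw [hr]; positivity

lemma S_bddBelow (hD : det2 v₁ v₂ ≠ 0) (hL1 : L (vecR v₁) = 1 - b₁)
    (hL2 : L (vecR v₂) = 1 - b₂) (hb1 : b₁ ≤ 1) (hb2 : b₂ ≤ 1) :
    BddBelow (Sv v₁ v₂ L) := ⟨0, fun r hr => S_nonneg hD hL1 hL2 hb1 hb2 r hr⟩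

lemma one_one_mem (hD : det2 v₁ v₂ ≠ 0) (hL1 : L (vecR v₁) = 1 - b₁)
    (hL2 : L (vecR v₂) = 1 - b₂) :
    (1 - b₁) + (1 - b₂) ∈ Sv v₁ v₂ L := by
  rw [S_char hD hL1 hL2]
  refine ⟨ptc v₁ v₂ (0,0) 0 1 1, ?_, ?_, ?_⟩
  · rw [ac_ptc hD]; norm_num
  · rw [bc_ptc hD]; norm_num
  · rw [ac_ptc hD, bc_ptc hD]; norm_num

lemma m_nonneg (hD : det2 v₁ v₂ ≠ 0) (hL1 : L (vecR v₁) = 1 - b₁)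
    (hL2 : L (vecR v₂) = 1 - b₂) (hb1 : b₁ ≤ 1) (hb2 : b₂ ≤ 1) :
    0 ≤ sInf (Sv v₁ v₂ L) :=
  le_csInf ⟨_, one_one_mem hD hL1 hL2⟩ (S_nonneg hD hL1 hL2 hb1 hb2)

lemma m_le (hD : det2 v₁ v₂ ≠ 0) (hL1 : L (vecR v₁) = 1 - b₁)
    (hL2 : L (vecR v₂) = 1 - b₂) (hb1 : b₁ ≤ 1) (hb2 : b₂ ≤ 1) :
    sInf (Sv v₁ v₂ L) ≤ (1 - b₁) + (1 - b₂) :=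
  csInf_le (S_bddBelow hD hL1 hL2 hb1 hb2) (one_one_mem hD hL1 hL2)

lemma sInf_le_value (hD : det2 v₁ v₂ ≠ 0) (hL1 : L (vecR v₁) = 1 - b₁)
    (hL2 : L (vecR v₂) = 1 - b₂) (hb1 : b₁ ≤ 1) (hb2 : b₂ ≤ 1)
    {u : ℤ × ℤ} (ha : 0 < ac v₁ v₂ u) (hb : 0 < bc v₁ v₂ u) :
    sInf (Sv v₁ v₂ L) ≤ ac v₁ v₂ u * (1 - b₁) + bc v₁ v₂ u * (1 - b₂) :=
  csInf_le (S_bddBelow hD hL1 hL2 hb1 hb2)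
    ((S_char hD hL1 hL2 _).2 ⟨u, ha, hb, rfl⟩)

lemma exists_min (hD : det2 v₁ v₂ ≠ 0) (hL1 : L (vecR v₁) = 1 - b₁)
    (hL2 : L (vecR v₂) = 1 - b₂) (hc1 : 0 < 1 - b₁) (hc2 : 0 < 1 - b₂) :
    ∃ u : ℤ × ℤ, 0 < ac v₁ v₂ u ∧ 0 < bc v₁ v₂ u ∧
      ac v₁ v₂ u * (1 - b₁) + bc v₁ v₂ u * (1 - b₂) = sInf (Sv v₁ v₂ L) := by
  have hb1 : b₁ ≤ 1 := by linarith
  have hb2 : b₂ ≤ 1 := by linarith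
  set c₁ := 1 - b₁
  set c₂ := 1 - b₂
  set T : ℝ := c₁ + c₂ with hT
  set S' : Set ℝ := Sv v₁ v₂ L ∩ Set.Iic T with hS'
  have hdne := dR_ne hD
  -- finiteness of S'
  have hfin : S'.Finite := by
    set N : ℤ := ⌈|dR v₁ v₂| * (T / c₁ + T / c₂)⌉ with hN
    have hsub : S' ⊆ (fun p : ℤ × ℤ =>
        (((p.1 : ℝ)) * c₁ + ((p.2 : ℝ)) * c₂) / dR v₁ v₂) ''
        (Set.Icc ((-N, -N) : ℤ × ℤ) (N, N)) := by
      rintro r ⟨hrS, hrT⟩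
      obtain ⟨u, ha, hb, hr⟩ := (S_char hD hL1 hL2 r).1 hrS
      rw [show (1 - b₁ : ℝ) = c₁ from rfl, show (1 - b₂ : ℝ) = c₂ from rfl] at hr
      have hrT' : r ≤ T := hrT
      refine ⟨(u.1 * v₂.2 - u.2 * v₂.1, v₁.1 * u.2 - v₁.2 * u.1), ?_, ?_⟩
      · have hac : ac v₁ v₂ u ≤ T / c₁ := by
          rw [le_div_iff₀ hc1]
          nlinarith [mul_pos hb hc2]
        have hbc : bc v₁ v₂ u ≤ T / c₂ := by
          rw [le_div_iff₀ hc2]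
          nlinarith [mul_pos ha hc1]
        have hTc : 0 < T / c₁ + T / c₂ := by positivity
        have kabs : |((u.1 * v₂.2 - u.2 * v₂.1 : ℤ) : ℝ)| ≤ (N : ℝ) := by
          have : ((u.1 * v₂.2 - u.2 * v₂.1 : ℤ) : ℝ) = ac v₁ v₂ u * dR v₁ v₂ := by
            rw [ac]; field_simp
          rw [this, abs_mul]
          have h1 : |ac v₁ v₂ u| ≤ T / c₁ + T / c₂ := by
            rw [abs_of_pos ha]; linarith [div_nonneg (by linarith : (0:ℝ) ≤ T) hc2.le]
          calc |ac v₁ v₂ u| * |dR v₁ v₂| ≤ (T / c₁ + T / c₂) * |dR v₁ v₂| := by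
                apply mul_le_mul_of_nonneg_right h1 (abs_nonneg _)
            _ = |dR v₁ v₂| * (T / c₁ + T / c₂) := by ring
            _ ≤ (N : ℝ) := Int.le_ceil _
        have kabs2 : |((v₁.1 * u.2 - v₁.2 * u.1 : ℤ) : ℝ)| ≤ (N : ℝ) := by
          have : ((v₁.1 * u.2 - v₁.2 * u.1 : ℤ) : ℝ) = bc v₁ v₂ u * dR v₁ v₂ := by
            rw [bc]; field_simp
          rw [this, abs_mul]
          have h1 : |bc v₁ v₂ u| ≤ T / c₁ + T / c₂ := by
            rw [abs_of_pos hb]; linarith [div_nonneg (by linarith : (0:ℝ) ≤ T) hc1.le]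
          calc |bc v₁ v₂ u| * |dR v₁ v₂| ≤ (T / c₁ + T / c₂) * |dR v₁ v₂| := by
                apply mul_le_mul_of_nonneg_right h1 (abs_nonneg _)
            _ = |dR v₁ v₂| * (T / c₁ + T / c₂) := by ring
            _ ≤ (N : ℝ) := Int.le_ceil _
        have e1 : |(u.1 * v₂.2 - u.2 * v₂.1 : ℤ)| ≤ N := by
          have := kabs; rw [← Int.cast_abs] at this; exact_mod_cast this
        have e2 : |(v₁.1 * u.2 - v₁.2 * u.1 : ℤ)| ≤ N := by
          have := kabs2; rw [← Int.cast_abs] at this; exact_mod_cast this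
        rw [Set.mem_Icc]
        refine ⟨Prod.mk_le_mk.2 ⟨?_, ?_⟩, Prod.mk_le_mk.2 ⟨?_, ?_⟩⟩
        · linarith [(abs_le.1 e1).1]
        · linarith [(abs_le.1 e2).1]
        · exact (abs_le.1 e1).2
        · exact (abs_le.1 e2).2
      · rw [hr, ac, bc]; ring
    exact Set.Finite.subset (Set.Finite.image _ (Set.finite_Icc _ _)) hsub
  have hTmem : T ∈ S' := ⟨one_one_mem hD hL1 hL2, le_refl T⟩
  have hne' : S'.Nonempty := ⟨T, hTmem⟩
  have hmem' : sInf S' ∈ S' := Set.Nonempty.csInf_mem hne' hfin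
  have heq : sInf (Sv v₁ v₂ L) = sInf S' := by
    apply le_antisymm
    · exact csInf_le_csInf (S_bddBelow hD hL1 hL2 hb1 hb2) hne' Set.inter_subset_left
    · apply le_csInf ⟨_, one_one_mem hD hL1 hL2⟩
      intro r hr
      rcases le_or_gt r T with h | h
      · exact csInf_le (Set.Finite.bddBelow hfin) ⟨hr, h⟩
      · exact le_trans (csInf_le (Set.Finite.bddBelow hfin) hTmem) h.le
    
  obtain ⟨u, ha, hb, hr⟩ := (S_char hD hL1 hL2 _).1 hmem'.1
  exact ⟨u, ha, hb, by rw [← hr, ← heq]⟩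

end datum2

section datum3
variable {v₁ v₂ : ℤ × ℤ} {b₁ b₂ : ℝ} {L : ℝ × ℝ →ₗ[ℝ] ℝ}

lemma deg (hD : det2 v₁ v₂ ≠ 0) (hL1 : L (vecR v₁) = 1 - b₁)
    (hL2 : L (vecR v₂) = 1 - b₂) (hcop1 : IsCoprime v₁.1 v₁.2)
    (hb1 : b₁ = 1) (hb2 : b₂ ≤ 1) :
    ∃ q : ℕ, 1 ≤ q ∧ sInf (Sv v₁ v₂ L) = (1 - b₂) / q := by
  have hb1' : b₁ ≤ 1 := le_of_eq hb1
  have hc1 : (1:ℝ) - b₁ = 0 := by rw [hb1]; ring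
  set q : ℕ := (det2 v₁ v₂).natAbs with hq
  have hq1 : 1 ≤ q := Int.natAbs_pos.mpr hD
  have hdabs : |dR v₁ v₂| = (q : ℝ) := by
    rw [dR, hq]; push_cast [Nat.cast_natAbs]; simp
  have hdne := dR_ne hD
  have habs_pos : (0:ℝ) < |dR v₁ v₂| := abs_pos.mpr hdne
  have hc2 : (0:ℝ) ≤ 1 - b₂ := by linarith
  refine ⟨q, hq1, ?_⟩
  apply le_antisymm
  · -- membership of (1 - b₂)/q in Sv
    obtain ⟨x, y, hxy⟩ := hcop1
    set e : ℤ := if 0 < det2 v₁ v₂ then 1 else -1 with he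
    set u₁ : ℤ × ℤ := (e * (-y), e * x) with hu₁
    have hbcu₁ : bc v₁ v₂ u₁ = 1 / |dR v₁ v₂| := by
      have hnum : v₁.1 * (e * x) - v₁.2 * (e * (-y)) = e := by
        linear_combination e * hxy
      rw [bc, hu₁]
      simp only
      rw [hnum]
      by_cases hpos : 0 < det2 v₁ v₂
      · rw [he, if_pos hpos, abs_of_pos (by rw [dR]; exact_mod_cast hpos)]
        norm_num
      · have hneg : det2 v₁ v₂ < 0 := lt_of_le_of_ne (not_lt.1 hpos) hD
        rw [he, if_neg hpos, abs_of_neg (by rw [dR]; exact_mod_cast hneg)]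
        push_cast
        rw [div_neg, neg_div]
      
    set s : ℤ := ⌊-ac v₁ v₂ u₁⌋ + 1 with hs
    set u₂ : ℤ × ℤ := ptc v₁ v₂ u₁ 1 s 0 with hu₂
    have hac₂ : 0 < ac v₁ v₂ u₂ := by
      rw [hu₂, ac_ptc hD]
      push_cast
      have := Int.lt_floor_add_one (-ac v₁ v₂ u₁)
      push_cast [hs] at this ⊢
      linarith
    have hbc₂ : bc v₁ v₂ u₂ = 1 / |dR v₁ v₂| := by
      rw [hu₂, bc_ptc hD]; push_cast; rw [hbcu₁]; ring
    have hmem : (1 - b₂)/q ∈ Sv v₁ v₂ L := by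
      rw [S_char hD hL1 hL2]
      refine ⟨u₂, hac₂, by rw [hbc₂]; positivity, ?_⟩
      rw [hc1, hbc₂, hdabs]
      ring
    exact csInf_le (S_bddBelow hD hL1 hL2 hb1' hb2) hmem
  · -- lower bound
    apply le_csInf ⟨_, one_one_mem hD hL1 hL2⟩
    intro r hr
    obtain ⟨u, ha, hb, hrv⟩ := (S_char hD hL1 hL2 r).1 hr
    have hbcl : 1 / |dR v₁ v₂| ≤ bc v₁ v₂ u := by
      have hform : bc v₁ v₂ u = ((v₁.1 * u.2 - v₁.2 * u.1 : ℤ) : ℝ) / dR v₁ v₂ := rfl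
      set k : ℤ := v₁.1 * u.2 - v₁.2 * u.1 with hk
      have hkne : k ≠ 0 := by
        intro h0
        rw [hform, h0] at hb
        norm_num at hb
      have h1k : (1:ℝ) ≤ |(k:ℝ)| := by
        rw [← Int.cast_abs]
        exact_mod_cast Int.one_le_abs hkne
      have : bc v₁ v₂ u = (k:ℝ) / dR v₁ v₂ := hform
      calc 1 / |dR v₁ v₂| ≤ |(k:ℝ)| / |dR v₁ v₂| := by
            rw [div_le_div_iff₀ habs_pos habs_pos]
            nlinarith [habs_pos]
          _ = |(k:ℝ) / dR v₁ v₂| := (abs_div _ _).symm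
          _ = |bc v₁ v₂ u| := by rw [this]
          _ = bc v₁ v₂ u := abs_of_pos hb
    rw [hrv, hc1, hdabs.symm]
    have : (1 - b₂) / |dR v₁ v₂| ≤ bc v₁ v₂ u * (1 - b₂) := by
      rw [div_eq_mul_one_div, mul_comm]
      exact mul_le_mul_of_nonneg_right hbcl hc2
    linarith [this]

end datum3

section datum4
variable {v₁ v₂ : ℤ × ℤ} {b₁ b₂ : ℝ} {L : ℝ × ℝ →ₗ[ℝ] ℝ}

/-- fract-cell helper -/
lemma fract_cell_close {x y : ℝ} {Nc : ℕ} (hNc : 0 < Nc)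
    (h : (⌊Int.fract x * Nc⌋).toNat = (⌊Int.fract y * Nc⌋).toNat) :
    |Int.fract x - Int.fract y| < 1 / Nc := by
  have hx : (0:ℝ) ≤ Int.fract x * Nc := by
    have := Int.fract_nonneg x; positivity
  have hy : (0:ℝ) ≤ Int.fract y * Nc := by
    have := Int.fract_nonneg y; positivity
  have hfl : ⌊Int.fract x * Nc⌋ = ⌊Int.fract y * Nc⌋ := by
    have h1 : (0:ℤ) ≤ ⌊Int.fract x * Nc⌋ := Int.floor_nonneg.mpr hx
    have h2 : (0:ℤ) ≤ ⌊Int.fract y * Nc⌋ := Int.floor_nonneg.mpr hy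
    omega
  have habs := Int.abs_sub_lt_one_of_floor_eq_floor hfl
  have hNc' : (0:ℝ) < Nc := by exact_mod_cast hNc
  rw [lt_div_iff₀ hNc']
  calc |Int.fract x - Int.fract y| * Nc = |Int.fract x * Nc - Int.fract y * Nc| := by
        rw [← abs_of_pos hNc', ← abs_mul, abs_of_pos hNc']
        congr 1
        ring
    _ < 1 := habs

set_option maxHeartbeats 1600000 in
lemma key (hD : det2 v₁ v₂ ≠ 0) (hL1 : L (vecR v₁) = 1 - b₁)
    (hL2 : L (vecR v₂) = 1 - b₂) (hc1 : 0 < 1 - b₁) (hc2 : 0 < 1 - b₂)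
    {ε : ℝ} (hε : 0 < ε) (hε1 : ε ≤ 1) :
    (∃ q i j : ℕ, 1 ≤ q ∧ q ≤ (⌈1/ε⌉₊)^2 ∧
       (i:ℝ) * (1-b₁) ≤ q * ((1-b₁)+(1-b₂)) ∧ (j:ℝ) * (1-b₂) ≤ q * ((1-b₁)+(1-b₂)) ∧
       sInf (Sv v₁ v₂ L) = ((i:ℝ) * (1-b₁) + (j:ℝ) * (1-b₂))/q)
    ∨ (∃ a b : ℝ, 0 < a ∧ a < ε ∧ 0 < b ∧
        sInf (Sv v₁ v₂ L) = a * (1-b₁) + b * (1-b₂) ∧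
        ∀ (n : ℕ) (t : ℤ), 1 ≤ n → 0 < n * b - t →
          sInf (Sv v₁ v₂ L) ≤ (n:ℝ) * a * (1-b₁) + ((n:ℝ) * b - t) * (1-b₂))
    ∨ (∃ a b : ℝ, 0 < b ∧ b < ε ∧ 0 < a ∧
        sInf (Sv v₁ v₂ L) = a * (1-b₁) + b * (1-b₂) ∧
        ∀ (n : ℕ) (t : ℤ), 1 ≤ n → 0 < n * a - t →
          sInf (Sv v₁ v₂ L) ≤ ((n:ℝ) * a - t) * (1-b₁) + (n:ℝ) * b * (1-b₂)) := by
  have hb1 : b₁ ≤ 1 := by linarith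
  have hb2 : b₂ ≤ 1 := by linarith
  set c₁ : ℝ := 1 - b₁ with hc₁def
  set c₂ : ℝ := 1 - b₂ with hc₂def
  set m : ℝ := sInf (Sv v₁ v₂ L) with hm
  have hmv : ∀ u : ℤ × ℤ, 0 < ac v₁ v₂ u → 0 < bc v₁ v₂ u →
      m ≤ ac v₁ v₂ u * c₁ + bc v₁ v₂ u * c₂ := fun u ha hb =>
    sInf_le_value hD hL1 hL2 hb1 hb2 ha hb
  -- the JT property holds for ANY point of the lattice realizing the minimum
  have JT2 : ∀ a b : ℝ, 0 < a → 0 < b → m = a * c₁ + b * c₂ →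
      (∃ u : ℤ × ℤ, ac v₁ v₂ u = a ∧ bc v₁ v₂ u = b) →
      ∀ (n : ℕ) (t : ℤ), 1 ≤ n → 0 < n * b - t →
        m ≤ (n:ℝ) * a * c₁ + ((n:ℝ) * b - t) * c₂ := by
    rintro a b ha hb hmab ⟨u, hua, hub⟩ n t hn hpos
    have hn' : (0:ℝ) < n := by exact_mod_cast hn
    have h1 : ac v₁ v₂ (ptc v₁ v₂ u n 0 (-t)) = n * a := by
      rw [ac_ptc hD]; push_cast; rw [hua]; ring
    have h2 : bc v₁ v₂ (ptc v₁ v₂ u n 0 (-t)) = n * b - t := by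
      rw [bc_ptc hD]; push_cast; rw [hub]; ring
    have := hmv (ptc v₁ v₂ u n 0 (-t)) (by rw [h1]; positivity) (by rw [h2]; exact hpos)
    rw [h1, h2] at this
    exact this
  have JT3 : ∀ a b : ℝ, 0 < a → 0 < b → m = a * c₁ + b * c₂ →
      (∃ u : ℤ × ℤ, ac v₁ v₂ u = a ∧ bc v₁ v₂ u = b) →
      ∀ (n : ℕ) (t : ℤ), 1 ≤ n → 0 < n * a - t →
        m ≤ ((n:ℝ) * a - t) * c₁ + (n:ℝ) * b * c₂ := by
    rintro a b ha hb hmab ⟨u, hua, hub⟩ n t hn hpos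
    have hn' : (0:ℝ) < n := by exact_mod_cast hn
    have h1 : ac v₁ v₂ (ptc v₁ v₂ u n (-t) 0) = n * a - t := by
      rw [ac_ptc hD]; push_cast; rw [hua]; ring
    have h2 : bc v₁ v₂ (ptc v₁ v₂ u n (-t) 0) = n * b := by
      rw [bc_ptc hD]; push_cast; rw [hub]; ring
    have := hmv (ptc v₁ v₂ u n (-t) 0) (by rw [h1]; exact hpos) (by rw [h2]; positivity)
    rw [h1, h2] at this
    exact this
  obtain ⟨u₀, ha₀, hb₀, hval⟩ := exists_min hD hL1 hL2 hc1 hc2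
  set a : ℝ := ac v₁ v₂ u₀ with hadef
  set b : ℝ := bc v₁ v₂ u₀ with hbdef
  have hex : ∃ u : ℤ × ℤ, ac v₁ v₂ u = a ∧ bc v₁ v₂ u = b := ⟨u₀, rfl, rfl⟩
  by_cases haε : a < ε
  · exact Or.inr (Or.inl ⟨a, b, ha₀, haε, hb₀, hval.symm, JT2 a b ha₀ hb₀ hval.symm hex⟩)
  by_cases hbε : b < ε
  · exact Or.inr (Or.inr ⟨a, b, hb₀, hbε, ha₀, hval.symm, JT3 a b ha₀ hb₀ hval.symm hex⟩)
  push_neg at haε hbε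
  -- pigeonhole
  set Nc : ℕ := ⌈1/ε⌉₊ with hNcdef
  have hNc0 : 0 < Nc := Nat.ceil_pos.mpr (by positivity)
  have hNcε : 1 / (Nc:ℝ) ≤ ε := by
    have h1 : 1/ε ≤ (Nc:ℝ) := Nat.le_ceil _
    calc 1 / (Nc:ℝ) ≤ 1 / (1/ε) := by
          apply one_div_le_one_div_of_le (by positivity) h1
      _ = ε := one_div_one_div ε
  have hpig : ∃ k l : ℕ, k < l ∧ l ≤ Nc^2 ∧
      (⌊Int.fract ((k:ℝ)*a) * Nc⌋).toNat = (⌊Int.fract ((l:ℝ)*a) * Nc⌋).toNat ∧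
      (⌊Int.fract ((k:ℝ)*b) * Nc⌋).toNat = (⌊Int.fract ((l:ℝ)*b) * Nc⌋).toNat := by
    have hcard : (Finset.range Nc ×ˢ Finset.range Nc).card < (Finset.range (Nc^2+1)).card := by
      rw [Finset.card_product, Finset.card_range, Finset.card_range]
      nlinarith [sq_nonneg Nc]
    have hmaps : ∀ k ∈ Finset.range (Nc^2+1),
        ((⌊Int.fract ((k:ℝ)*a) * Nc⌋).toNat, (⌊Int.fract ((k:ℝ)*b) * Nc⌋).toNat)
          ∈ Finset.range Nc ×ˢ Finset.range Nc := by
      intro k _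
      have key : ∀ x : ℝ, (⌊Int.fract x * Nc⌋).toNat < Nc := by
        intro x
        have h1 : Int.fract x * Nc < Nc := by
          have := Int.fract_lt_one x
          have hNc' : (0:ℝ) < Nc := by exact_mod_cast hNc0
          nlinarith
        have h2 : ⌊Int.fract x * Nc⌋ < (Nc:ℤ) := Int.floor_lt.mpr (by exact_mod_cast h1)
        omega
      simp only [Finset.mem_product, Finset.mem_range]
      exact ⟨key _, key _⟩
    obtain ⟨k, hk, l, hl, hkl, hfeq⟩ :=
      Finset.exists_ne_map_eq_of_card_lt_of_maps_to hcard hmaps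
    simp only [Prod.mk.injEq] at hfeq
    rcases lt_or_gt_of_ne hkl with h | h
    · exact ⟨k, l, h, by simpa using Nat.lt_succ_iff.mp (by simpa [pow_succ] using Finset.mem_range.mp hl), hfeq.1, hfeq.2⟩
    · exact ⟨l, k, h, by simpa using Nat.lt_succ_iff.mp (by simpa [pow_succ] using Finset.mem_range.mp hk), hfeq.1.symm, hfeq.2.symm⟩
  obtain ⟨k, l, hkl, hlNc, hca, hcb⟩ := hpig
  set q' : ℕ := l - k with hq'def
  have hq'1 : 1 ≤ q' := by omega
  have hq'Nc : q' ≤ Nc^2 := by omega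
  set t₁ : ℤ := ⌊(l:ℝ)*a⌋ - ⌊(k:ℝ)*a⌋ with ht₁def
  set t₂ : ℤ := ⌊(l:ℝ)*b⌋ - ⌊(k:ℝ)*b⌋ with ht₂def
  set w₁ : ℝ := (q':ℝ)*a - t₁ with hw₁def
  set w₂ : ℝ := (q':ℝ)*b - t₂ with hw₂def
  have hw₁ : w₁ = Int.fract ((l:ℝ)*a) - Int.fract ((k:ℝ)*a) := by
    rw [hw₁def, ht₁def, Int.fract, Int.fract]
    have : ((q':ℕ):ℝ) = (l:ℝ) - (k:ℝ) := by
      rw [hq'def]; push_cast [Nat.cast_sub hkl.le]; ring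
    rw [this]; push_cast; ring
  have hw₂ : w₂ = Int.fract ((l:ℝ)*b) - Int.fract ((k:ℝ)*b) := by
    rw [hw₂def, ht₂def, Int.fract, Int.fract]
    have : ((q':ℕ):ℝ) = (l:ℝ) - (k:ℝ) := by
      rw [hq'def]; push_cast [Nat.cast_sub hkl.le]; ring
    rw [this]; push_cast; ring
  have hw₁ε : |w₁| < ε := by
    rw [hw₁]
    exact lt_of_lt_of_le (fract_cell_close hNc0 hca.symm) hNcε
  have hw₂ε : |w₂| < ε := by
    rw [hw₂]
    exact lt_of_lt_of_le (fract_cell_close hNc0 hcb.symm) hNcε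
  have hq'R : (0:ℝ) < (q':ℝ) := by exact_mod_cast hq'1
  by_cases hzero : w₁ = 0 ∧ w₂ = 0
  · -- low-complexity case
    left
    have ht₁' : (t₁:ℝ) = (q':ℝ) * a := by
      have := hzero.1; rw [hw₁def] at this; linarith
    have ht₂' : (t₂:ℝ) = (q':ℝ) * b := by
      have := hzero.2; rw [hw₂def] at this; linarith
    have ht₁pos : 0 < t₁ := by
      have : (0:ℝ) < (t₁:ℝ) := by rw [ht₁']; positivity
      exact_mod_cast this
    have ht₂pos : 0 < t₂ := by
      have : (0:ℝ) < (t₂:ℝ) := by rw [ht₂']; positivity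
      exact_mod_cast this
    refine ⟨q', t₁.toNat, t₂.toNat, hq'1, hq'Nc, ?_, ?_, ?_⟩
    · have hi : ((t₁.toNat : ℕ):ℝ) = (t₁:ℝ) := by
        rw [show ((t₁.toNat : ℕ):ℝ) = ((t₁.toNat : ℤ):ℝ) from (Int.cast_natCast _).symm,
          Int.toNat_of_nonneg ht₁pos.le]
      rw [hi, ht₁']
      have h1 : a * c₁ ≤ m := by nlinarith [mul_pos hb₀ hc2]
      have h2 : m ≤ c₁ + c₂ := m_le hD hL1 hL2 hb1 hb2
      nlinarith
    · have hj : ((t₂.toNat : ℕ):ℝ) = (t₂:ℝ) := by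
        rw [show ((t₂.toNat : ℕ):ℝ) = ((t₂.toNat : ℤ):ℝ) from (Int.cast_natCast _).symm,
          Int.toNat_of_nonneg ht₂pos.le]
      rw [hj, ht₂']
      have h1 : b * c₂ ≤ m := by nlinarith [mul_pos ha₀ hc1]
      have h2 : m ≤ c₁ + c₂ := m_le hD hL1 hL2 hb1 hb2
      nlinarith
    · have hi : ((t₁.toNat : ℕ):ℝ) = (t₁:ℝ) := by
        rw [show ((t₁.toNat : ℕ):ℝ) = ((t₁.toNat : ℤ):ℝ) from (Int.cast_natCast _).symm,
          Int.toNat_of_nonneg ht₁pos.le]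
      have hj : ((t₂.toNat : ℕ):ℝ) = (t₂:ℝ) := by
        rw [show ((t₂.toNat : ℕ):ℝ) = ((t₂.toNat : ℤ):ℝ) from (Int.cast_natCast _).symm,
          Int.toNat_of_nonneg ht₂pos.le]
      rw [hi, hj, eq_div_iff (ne_of_gt hq'R)]
      rw [ht₁', ht₂']
      linear_combination (q':ℝ) * hval.symm
  · -- some nonzero short vector
    set δ : ℝ := w₁ * c₁ + w₂ * c₂ with hδdef
    rcases lt_trichotomy δ 0 with hδ | hδ | hδ
    · exfalso
      have hac' : ac v₁ v₂ (ptc v₁ v₂ u₀ (1 + q') (-t₁) (-t₂)) = a + w₁ := by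
        rw [ac_ptc hD]; push_cast; rw [hw₁def]; ring
      have hbc' : bc v₁ v₂ (ptc v₁ v₂ u₀ (1 + q') (-t₁) (-t₂)) = b + w₂ := by
        rw [bc_ptc hD]; push_cast; rw [hw₂def]; ring
      have h1 : 0 < a + w₁ := by
        have := (abs_lt.1 hw₁ε).1; linarith
      have h2 : 0 < b + w₂ := by
        have := (abs_lt.1 hw₂ε).1; linarith
      have := hmv _ (by rw [hac']; exact h1) (by rw [hbc']; exact h2)
      rw [hac', hbc'] at this
      nlinarith
    · -- sliding case
      have hw1ne : w₁ ≠ 0 := by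
        intro h0
        apply hzero
        refine ⟨h0, ?_⟩
        rw [hδdef, h0] at hδ
        have : w₂ * c₂ = 0 := by linarith
        rcases mul_eq_zero.1 this with h | h
        · exact h
        · exact absurd h (ne_of_gt hc2)
      set σ : ℤ := if 0 < w₁ then 1 else -1 with hσdef
      set W₁ : ℝ := (σ:ℝ) * w₁ with hW₁def
      set W₂ : ℝ := (σ:ℝ) * w₂ with hW₂def
      have hW₁abs : W₁ = |w₁| := by
        by_cases h : 0 < w₁
        · rw [hW₁def, hσdef, if_pos h, abs_of_pos h]; push_cast; ring
        · have hneg : w₁ < 0 := lt_of_le_of_ne (not_lt.1 h) hw1ne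
          rw [hW₁def, hσdef, if_neg h, abs_of_neg hneg]; push_cast; ring
      have hW₁pos : 0 < W₁ := by rw [hW₁abs]; exact abs_pos.mpr hw1ne
      have hW₁ε : W₁ < ε := by rw [hW₁abs]; exact hw₁ε
      have hδσ : W₁ * c₁ + W₂ * c₂ = 0 := by
        rw [hW₁def, hW₂def]
        have : δ = 0 := hδ
        rw [hδdef] at this
        linear_combination (σ:ℝ) * this
      have hW₂neg : W₂ < 0 := by nlinarith [mul_pos hW₁pos hc1]
      set kk : ℤ := ⌈a / W₁⌉ - 1 with hkkdef
      have hone_lt : (1:ℝ) < a / W₁ := by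
        rw [lt_div_iff₀ hW₁pos]
        nlinarith
      have hk1 : 1 ≤ kk := by
        have h1 : (1:ℝ) < (⌈a / W₁⌉ : ℝ) := lt_of_lt_of_le hone_lt (Int.le_ceil _)
        have : (1:ℤ) < ⌈a / W₁⌉ := by exact_mod_cast h1
        omega
      have hkkR : (1:ℝ) ≤ (kk:ℝ) := by exact_mod_cast hk1
      have hka : (kk:ℝ) * W₁ < a := by
        have h1 : (kk:ℝ) < a / W₁ := by
          have := Int.ceil_lt_add_one (a / W₁)
          rw [hkkdef]; push_cast; linarith
        calc (kk:ℝ) * W₁ < (a / W₁) * W₁ := by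
              apply mul_lt_mul_of_pos_right h1 hW₁pos
          _ = a := div_mul_cancel₀ a (ne_of_gt hW₁pos)
      have hka2 : a - (kk:ℝ) * W₁ ≤ W₁ := by
        have h1 : a / W₁ ≤ (⌈a / W₁⌉ : ℝ) := Int.le_ceil _
        have h2 : a ≤ (⌈a / W₁⌉ : ℝ) * W₁ := by
          have h3 := mul_le_mul_of_nonneg_right h1 hW₁pos.le
          rwa [div_mul_cancel₀ a (ne_of_gt hW₁pos)] at h3
        have : ((⌈a / W₁⌉:ℝ)) = (kk:ℝ) + 1 := by rw [hkkdef]; push_cast; ring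
        rw [this] at h2
        linarith
      set a'' : ℝ := a - (kk:ℝ) * W₁ with ha''def
      set b'' : ℝ := b - (kk:ℝ) * W₂ with hb''def
      have ha''pos : 0 < a'' := by rw [ha''def]; linarith
      have ha''ε : a'' < ε := lt_of_le_of_lt hka2 hW₁ε
      have hb''pos : 0 < b'' := by
        rw [hb''def]
        nlinarith
      have hval'' : m = a'' * c₁ + b'' * c₂ := by
        rw [ha''def, hb''def]
        linear_combination hval.symm + (kk:ℝ) * hδσ
      have hex'' : ∃ u : ℤ × ℤ, ac v₁ v₂ u = a'' ∧ bc v₁ v₂ u = b'' := by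
        refine ⟨ptc v₁ v₂ u₀ (1 - kk*σ*q') (kk*σ*t₁) (kk*σ*t₂), ?_, ?_⟩
        · rw [ac_ptc hD, ha''def, hW₁def, hw₁def]; push_cast; ring
        · rw [bc_ptc hD, hb''def, hW₂def, hw₂def]; push_cast; ring
      exact Or.inr (Or.inl ⟨a'', b'', ha''pos, ha''ε, hb''pos, hval'',
        JT2 a'' b'' ha''pos hb''pos hval'' hex''⟩)
    · exfalso
      have hac' : ac v₁ v₂ (ptc v₁ v₂ u₀ (1 - (q':ℤ)) t₁ t₂) = a - w₁ := by
        rw [ac_ptc hD]; push_cast; rw [hw₁def]; ring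
      have hbc' : bc v₁ v₂ (ptc v₁ v₂ u₀ (1 - (q':ℤ)) t₁ t₂) = b - w₂ := by
        rw [bc_ptc hD]; push_cast; rw [hw₂def]; ring
      have h1 : 0 < a - w₁ := by
        have := (abs_lt.1 hw₁ε).2; linarith
      have h2 : 0 < b - w₂ := by
        have := (abs_lt.1 hw₂ε).2; linarith
      have := hmv _ (by rw [hac']; exact h1) (by rw [hbc']; exact h2)
      rw [hac', hbc'] at this
      nlinarith

end datum4

/-- separation from a finite set -/
lemma sep_finite {s : Set ℝ} (hs : s.Finite) (y : ℝ) :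
    ∃ ρ : ℝ, 0 < ρ ∧ ∀ z ∈ s, z ≠ y → ρ ≤ |z - y| := by
  set s' : Set ℝ := (fun z => |z - y|) '' (s \ {y}) with hs'
  have hfin' : s'.Finite := ((hs.subset Set.diff_subset).image _)
  by_cases hne : s'.Nonempty
  · have hmem := hne.csInf_mem hfin'
    obtain ⟨z₀, ⟨hz₀s, hz₀ne⟩, hz₀⟩ := hmem
    refine ⟨sInf s', ?_, ?_⟩
    · rw [← hz₀]
      exact abs_pos.mpr (sub_ne_zero.mpr (by simpa using hz₀ne))
    · intro z hz hzny
      exact csInf_le hfin'.bddBelow ⟨z, ⟨hz, by simpa⟩, rfl⟩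
  · refine ⟨1, one_pos, fun z hz hzy => absurd ⟨|z - y|, ⟨z, ⟨hz, by simpa⟩, rfl⟩⟩ hne⟩

/-- uniform positive lower bound on the positive elements of a finite set -/
lemma exists_pos_lb {s : Set ℝ} (hs : s.Finite) :
    ∃ ρ : ℝ, 0 < ρ ∧ ∀ c ∈ s, 0 < c → ρ ≤ c := by
  set s' : Set ℝ := s ∩ Set.Ioi 0 with hs'
  have hfin' : s'.Finite := hs.subset Set.inter_subset_left
  by_cases hne : s'.Nonempty
  · have hmem := hne.csInf_mem hfin'
    refine ⟨sInf s', hmem.2, ?_⟩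
    intro c hc hcpos
    exact csInf_le hfin'.bddBelow ⟨hc, hcpos⟩
  · exact ⟨1, one_pos, fun c hc hcpos => absurd ⟨c, hc, hcpos⟩ hne⟩

def Fset (Cs : Set ℝ) (Q B : ℕ) : Set ℝ :=
  {x : ℝ | ∃ c₁ ∈ Cs, ∃ c₂ ∈ Cs, ∃ q i j : ℕ, 1 ≤ q ∧ q ≤ Q ∧ i ≤ B ∧ j ≤ B ∧
    x = ((i:ℝ) * c₁ + (j:ℝ) * c₂)/q}

lemma Fset_finite {Cs : Set ℝ} (hCs : Cs.Finite) (Q B : ℕ) : (Fset Cs Q B).Finite := by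
  have hsub : Fset Cs Q B ⊆ (fun p : ℝ × ℝ × ℕ × ℕ × ℕ =>
      ((p.2.2.2.1 : ℝ) * p.1 + (p.2.2.2.2 : ℝ) * p.2.1) / (p.2.2.1 : ℝ)) ''
      (Cs ×ˢ Cs ×ˢ Set.Iic Q ×ˢ Set.Iic B ×ˢ Set.Iic B) := by
    rintro x ⟨c₁, hc₁, c₂, hc₂, q, i, j, _, hqQ, hiB, hjB, hx⟩
    exact ⟨(c₁, c₂, q, i, j), ⟨hc₁, hc₂, hqQ, hiB, hjB⟩, hx.symm⟩
  exact Set.Finite.subset (Set.Finite.image _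
    (hCs.prod (hCs.prod ((Set.finite_Iic Q).prod
      ((Set.finite_Iic B).prod (Set.finite_Iic B)))))) hsub

def Dset (Cs : Set ℝ) : Set ℝ :=
  {z : ℝ | ∃ c ∈ Cs, ∃ q : ℕ, 0 < c ∧ 1 ≤ q ∧ z = c / q}

lemma dioph {b : ℝ} (hb : 0 < b)
    (H : ∀ (j : ℕ) (t : ℤ), 1 ≤ j → 0 < (j:ℝ) * b - (t:ℝ) → b ≤ (j:ℝ) * b - (t:ℝ)) :
    ∃ q : ℕ, 1 ≤ q ∧ b = 1/q := by
  set n : ℕ := ⌈1/b⌉₊ with hn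
  have hn1 : 1 ≤ n := Nat.one_le_iff_ne_zero.mpr (by
    have : 0 < n := Nat.ceil_pos.mpr (by positivity)
    omega)
  have hnb : 1 ≤ (n:ℝ) * b := by
    have h1 : 1/b ≤ (n:ℝ) := Nat.le_ceil _
    calc (1:ℝ) = (1/b) * b := by field_simp
      _ ≤ (n:ℝ) * b := mul_le_mul_of_nonneg_right h1 hb.le
  have hub : (n:ℝ) * b < 1 + b := by
    have h1 : (n:ℝ) < 1/b + 1 := Nat.ceil_lt_add_one (by positivity)
    have := mul_lt_mul_of_pos_right h1 hb
    calc (n:ℝ) * b < (1/b + 1) * b := this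
      _ = 1 + b := by field_simp
  rcases eq_or_lt_of_le hnb with heq | hlt
  · refine ⟨n, hn1, ?_⟩
    have hn0 : (n:ℝ) ≠ 0 := by positivity
    rw [eq_div_iff hn0]
    linear_combination -heq
  · exfalso
    have h := H n 1 hn1 (by push_cast; linarith)
    push_cast at h
    linarith

lemma relintR_comm (v w : ℤ × ℤ) : relintR v w = relintR w v := by
  ext x
  constructor
  · rintro ⟨a, b, ha, hb, h⟩; exact ⟨b, a, hb, ha, by rw [h, add_comm]⟩
  · rintro ⟨a, b, ha, hb, h⟩; exact ⟨b, a, hb, ha, by rw [h, add_comm]⟩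

lemma Sv_comm (v₁ v₂ : ℤ × ℤ) (L : ℝ × ℝ →ₗ[ℝ] ℝ) : Sv v₁ v₂ L = Sv v₂ v₁ L := by
  unfold Sv
  rw [relintR_comm]

lemma det2_comm_ne {v₁ v₂ : ℤ × ℤ} (hD : det2 v₁ v₂ ≠ 0) : det2 v₂ v₁ ≠ 0 := by
  intro h
  apply hD
  have h2 : det2 v₂ v₁ = -det2 v₁ v₂ := by unfold det2; ring
  omega

set_option maxHeartbeats 1600000 in
lemma accPt_mem_D (Λ : Set ℝ) (hΛfin : Λ.Finite) (hΛ : Λ ⊆ Set.Iic 1) {y : ℝ} (hy : 0 < y)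
    (hacc : AccPt y (Filter.principal (toricSurfaceMlds Λ))) :
    y ∈ Dset ((fun t => 1 - t) '' Λ) := by
  classical
  by_contra hyD
  set Cs : Set ℝ := (fun t => 1 - t) '' Λ with hCsdef
  have hCsfin : Cs.Finite := hΛfin.image _
  obtain ⟨Cmax, hCmax1, hCmaxub⟩ : ∃ Cmax : ℝ, 1 ≤ Cmax ∧ ∀ c ∈ Cs, c ≤ Cmax := by
    obtain ⟨B, hB⟩ := hCsfin.bddAbove
    exact ⟨max B 1, le_max_right _ _, fun c hc => le_trans (hB hc) (le_max_left _ _)⟩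
  obtain ⟨cp, hcp, hcplb⟩ := exists_pos_lb hCsfin
  have step : ∀ n : ℕ, ∃ cS cB aS aB mm : ℝ,
      cS ∈ Cs ∧ cB ∈ Cs ∧ 0 < cS ∧ 0 < cB ∧ 0 < aS ∧ aS < 1/((n:ℝ)+1) ∧ 0 < aB ∧
      |mm - y| < 1/((n:ℝ)+1) ∧ mm = aS * cS + aB * cB ∧
      ∀ (nn : ℕ) (t : ℤ), 1 ≤ nn → 0 < (nn:ℝ) * aB - (t:ℝ) →
        mm ≤ (nn:ℝ) * aS * cS + ((nn:ℝ) * aB - (t:ℝ)) * cB := by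
    intro n
    set εn : ℝ := min (1/((n:ℝ)+1)) (y/2) with hεdef
    have hεpos : 0 < εn := lt_min (by positivity) (by positivity)
    have hε1 : εn ≤ 1 := le_trans (min_le_left _ _)
      (by rw [div_le_one (by positivity)]; push_cast; linarith [Nat.cast_nonneg (α := ℝ) n])
    set Qn : ℕ := (⌈1/εn⌉₊)^2 + ⌈Cmax/εn⌉₊ with hQdef
    set Bn : ℕ := Qn * (⌈2*Cmax/cp⌉₊ + 1) with hBdef
    have hQn1 : 1 ≤ Qn := by
      have h0 : 0 < ⌈1/εn⌉₊ := Nat.ceil_pos.mpr (by positivity)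
      calc 1 ≤ ⌈1/εn⌉₊ := h0
        _ ≤ (⌈1/εn⌉₊)^2 := Nat.le_self_pow (by norm_num) _
        _ ≤ Qn := Nat.le_add_right _ _
    have hBn1 : 1 ≤ Bn := Nat.mul_pos hQn1 (Nat.succ_pos _)
    have hFfin := Fset_finite hCsfin Qn Bn
    obtain ⟨ρ, hρ, hsep⟩ := sep_finite hFfin y
    obtain ⟨md, hmd, hmdne⟩ := accPt_iff_nhds.1 hacc
      (Metric.ball y (min εn ρ)) (Metric.ball_mem_nhds y (lt_min hεpos hρ))
    have hdist : |md - y| < min εn ρ := by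
      have := Metric.mem_ball.1 hmd.1
      rwa [Real.dist_eq] at this
    have hdε : |md - y| < εn := lt_of_lt_of_le hdist (min_le_left _ _)
    have hdρ : |md - y| < ρ := lt_of_lt_of_le hdist (min_le_right _ _)
    have hmdhalf : y/2 < md := by
      have h2 : εn ≤ y/2 := min_le_right _ _
      have := (abs_lt.1 hdε).1
      linarith
    obtain ⟨v₁, v₂, b₁, b₂, L, hcop1, hcop2, hD, hb₁Λ, hb₂Λ, hL1, hL2, hmdeq⟩ := hmd.2
    have hmdSv : md = sInf (Sv v₁ v₂ L) := hmdeq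
    have hb₁1 : b₁ ≤ 1 := hΛ hb₁Λ
    have hb₂1 : b₂ ≤ 1 := hΛ hb₂Λ
    have hc₁Cs : (1 - b₁) ∈ Cs := ⟨b₁, hb₁Λ, rfl⟩
    have hc₂Cs : (1 - b₂) ∈ Cs := ⟨b₂, hb₂Λ, rfl⟩
    have hFcontra : md ∉ Fset Cs Qn Bn := fun hF =>
      absurd (hsep md hF hmdne) (not_le.mpr hdρ)
    have hdeg_to_F : ∀ c : ℝ, c ∈ Cs → ∀ q : ℕ, 1 ≤ q → md = c / q → False := by
      intro c hc q hq1 hmdc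
      apply hFcontra
      have hqR : (0:ℝ) < q := by exact_mod_cast hq1
      have hceq : c = md * q := by rw [hmdc]; field_simp
      have hcpos : 0 < c := by rw [hceq]; nlinarith
      have hmdpos : 0 < md := by nlinarith
      have hqQ : q ≤ Qn := by
        have hεmd : εn ≤ md := le_of_lt (lt_of_le_of_lt (min_le_right _ _) hmdhalf)
        have hqc : (q:ℝ) = c / md := by
          rw [hceq]; field_simp
        have hq2 : (q:ℝ) ≤ Cmax / εn := by
          rw [hqc]
          exact div_le_div₀ (by linarith [hCmaxub c hc]) (hCmaxub c hc) hεpos hεmd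
        have hq3 : (q:ℝ) ≤ ((⌈Cmax/εn⌉₊:ℕ):ℝ) := le_trans hq2 (Nat.le_ceil _)
        have hq4 : q ≤ ⌈Cmax/εn⌉₊ := by exact_mod_cast hq3
        omega
      exact ⟨c, hc, c, hc, q, 0, 1, hq1, hqQ, Nat.zero_le _, hBn1,
        by rw [hmdc]; push_cast; ring⟩
    by_cases hb1 : b₁ = 1
    · obtain ⟨q, hq1, hqeq⟩ := deg hD hL1 hL2 hcop1 hb1 hb₂1
      exact (hdeg_to_F (1 - b₂) hc₂Cs q hq1 (by rw [hmdSv, hqeq])).elim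
    by_cases hb2 : b₂ = 1
    · have hD' := det2_comm_ne hD
      obtain ⟨q, hq1, hqeq⟩ := deg hD' hL2 hL1 hcop2 hb2 hb₁1
      exact (hdeg_to_F (1 - b₁) hc₁Cs q hq1
        (by rw [hmdSv, Sv_comm v₁ v₂ L, hqeq])).elim
    have hc1 : 0 < 1 - b₁ := by
      have := lt_of_le_of_ne hb₁1 hb1; linarith
    have hc2 : 0 < 1 - b₂ := by
      have := lt_of_le_of_ne hb₂1 hb2; linarith
    rcases key hD hL1 hL2 hc1 hc2 hεpos hε1 with hK | hK | hK
    · exfalso; apply hFcontra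
      obtain ⟨q, i, j, hq1, hqNc, hib, hjb, heq⟩ := hK
      have hqQ : q ≤ Qn := le_trans hqNc (Nat.le_add_right _ _)
      have hcp1 : cp ≤ 1 - b₁ := hcplb _ hc₁Cs hc1
      have hcp2 : cp ≤ 1 - b₂ := hcplb _ hc₂Cs hc2
      have hcm1 : 1 - b₁ ≤ Cmax := hCmaxub _ hc₁Cs
      have hcm2 : 1 - b₂ ≤ Cmax := hCmaxub _ hc₂Cs
      have hBnR : (2*Cmax/cp) * (q:ℝ) ≤ (Bn:ℝ) := by
        have ha1 : 2*Cmax/cp ≤ ((⌈2*Cmax/cp⌉₊ + 1 : ℕ):ℝ) := by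
          push_cast; linarith [Nat.le_ceil (2*Cmax/cp)]
        have ha2 : (q:ℝ) ≤ (Qn:ℝ) := by exact_mod_cast hqQ
        calc (2*Cmax/cp) * (q:ℝ) ≤ ((⌈2*Cmax/cp⌉₊ + 1:ℕ):ℝ) * (Qn:ℝ) :=
              mul_le_mul ha1 ha2 (by positivity) (by positivity)
          _ = (Bn:ℝ) := by rw [hBdef]; push_cast; ring
      have hiB : i ≤ Bn := by
        have hi1 : (i:ℝ)*cp ≤ 2*Cmax*(q:ℝ) := by
          nlinarith [Nat.cast_nonneg (α := ℝ) i, Nat.cast_nonneg (α := ℝ) q]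
        have hi2 : (i:ℝ) ≤ (2*Cmax/cp)*(q:ℝ) := by
          rw [div_mul_eq_mul_div, le_div_iff₀ hcp]; linarith
        exact_mod_cast le_trans hi2 hBnR
      have hjB : j ≤ Bn := by
        have hj1 : (j:ℝ)*cp ≤ 2*Cmax*(q:ℝ) := by
          nlinarith [Nat.cast_nonneg (α := ℝ) j, Nat.cast_nonneg (α := ℝ) q]
        have hj2 : (j:ℝ) ≤ (2*Cmax/cp)*(q:ℝ) := by
          rw [div_mul_eq_mul_div, le_div_iff₀ hcp]; linarith
        exact_mod_cast le_trans hj2 hBnR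
      exact ⟨1-b₁, hc₁Cs, 1-b₂, hc₂Cs, q, i, j, hq1, hqQ, hiB, hjB, by rw [hmdSv, heq]⟩
    · obtain ⟨a, b, hapos, haε, hbpos, hmeq, hJT⟩ := hK
      refine ⟨1-b₁, 1-b₂, a, b, md, hc₁Cs, hc₂Cs, hc1, hc2, hapos,
        lt_of_lt_of_le haε (min_le_left _ _), hbpos,
        lt_of_lt_of_le hdε (min_le_left _ _), by rw [hmdSv]; exact hmeq, ?_⟩
      intro nn t hnn ht
      rw [hmdSv]
      exact hJT nn t hnn ht
    · obtain ⟨a, b, hbpos, hbε, hapos, hmeq, hJT⟩ := hK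
      refine ⟨1-b₂, 1-b₁, b, a, md, hc₂Cs, hc₁Cs, hc2, hc1, hbpos,
        lt_of_lt_of_le hbε (min_le_left _ _), hapos,
        lt_of_lt_of_le hdε (min_le_left _ _), by rw [hmdSv, hmeq]; ring, ?_⟩
      intro nn t hnn ht
      have := hJT nn t hnn ht
      rw [hmdSv]
      linarith
  choose cS cB aS aB mm h1 h2 h3 h4 h5 h6 h7 h8 h9 h10 using step
  set g : ℕ → hCsfin.toFinset := fun n => ⟨cB n, (Set.Finite.mem_toFinset hCsfin).2 (h2 n)⟩
    with hgdef
  obtain ⟨cbar, hcbar⟩ := Finite.exists_infinite_fiber g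
  have hSinf : {n : ℕ | g n = cbar}.Infinite := by
    rw [← Set.infinite_coe_iff]
    exact hcbar
  choose nx hnx1 hnx2 using fun n => hSinf.exists_gt n
  set φ : ℕ → ℕ := fun i => nx^[i] (nx 0) with hφdef
  have hφsucc : ∀ i, φ (i+1) = nx (φ i) := fun i => Function.iterate_succ_apply' nx i (nx 0)
  have hφmem : ∀ i, g (φ i) = cbar := by
    intro i
    cases i with
    | zero => exact hnx1 0
    | succ i => rw [hφsucc i]; exact hnx1 (φ i)
  have hφmono : StrictMono φ := strictMono_nat_of_lt_succ (fun i => by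
    rw [hφsucc i]; exact hnx2 (φ i))
  have hφi : ∀ i, i ≤ φ i := fun i => hφmono.le_apply
  set c : ℝ := (cbar : ℝ) with hcdef
  have hφc : ∀ i, cB (φ i) = c := by
    intro i
    have := congrArg (Subtype.val) (hφmem i)
    simpa [hgdef] using this
  have hcpos : 0 < c := by rw [← hφc 0]; exact h4 (φ 0)
  have hcCs : c ∈ Cs := by rw [← hφc 0]; exact h2 (φ 0)
  have hfrac_le : ∀ i : ℕ, 1/((φ i:ℝ)+1) ≤ 1/((i:ℝ)+1) := by
    intro i
    apply one_div_le_one_div_of_le (by positivity)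
    have : (i:ℝ) ≤ (φ i:ℝ) := by exact_mod_cast hφi i
    linarith
  have htend0 : Filter.Tendsto (fun i:ℕ => 1/((i:ℝ)+1)) Filter.atTop (nhds 0) :=
    tendsto_one_div_add_atTop_nhds_zero_nat
  have hm_tend : Filter.Tendsto (fun i => mm (φ i)) Filter.atTop (nhds y) := by
    rw [tendsto_iff_dist_tendsto_zero]
    apply squeeze_zero (fun i => dist_nonneg) (fun i => ?_) htend0
    calc dist (mm (φ i)) y = |mm (φ i) - y| := Real.dist_eq _ _
      _ ≤ 1/((φ i:ℝ)+1) := (h8 (φ i)).le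
      _ ≤ 1/((i:ℝ)+1) := hfrac_le i
  have haS_tend : Filter.Tendsto (fun i => aS (φ i) * cS (φ i)) Filter.atTop (nhds 0) := by
    have hCt := htend0.const_mul Cmax
    rw [mul_zero] at hCt
    apply squeeze_zero (fun i => (mul_pos (h5 _) (h3 _)).le) (fun i => ?_) hCt
    have hb1 : aS (φ i) ≤ 1/((i:ℝ)+1) := le_trans (h6 (φ i)).le (hfrac_le i)
    have hb2 : cS (φ i) ≤ Cmax := hCmaxub _ (h1 _)
    calc aS (φ i) * cS (φ i) ≤ (1/((i:ℝ)+1)) * Cmax :=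
          mul_le_mul hb1 hb2 (h3 _).le (by positivity)
      _ = Cmax * (1/((i:ℝ)+1)) := by ring
  have hb_tend : Filter.Tendsto (fun i => aB (φ i)) Filter.atTop (nhds (y/c)) := by
    have heqi : ∀ i, aB (φ i) = (mm (φ i) - aS (φ i) * cS (φ i))/c := by
      intro i
      have h9' := h9 (φ i)
      rw [hφc i] at h9'
      field_simp
      linarith
    have htmp := (hm_tend.sub haS_tend).div_const c
    rw [sub_zero] at htmp
    exact htmp.congr (fun i => (heqi i).symm)
  have hH : ∀ (j : ℕ) (t : ℤ), 1 ≤ j → 0 < (j:ℝ)*(y/c) - (t:ℝ) →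
      (y/c) ≤ (j:ℝ)*(y/c) - (t:ℝ) := by
    intro j t hj hpos
    have hjtend : Filter.Tendsto (fun i => (j:ℝ)*aB (φ i) - (t:ℝ)) Filter.atTop
        (nhds ((j:ℝ)*(y/c) - (t:ℝ))) := (hb_tend.const_mul _).sub_const _
    have hev : ∀ᶠ i in Filter.atTop, 0 < (j:ℝ)*aB (φ i) - (t:ℝ) :=
      hjtend.eventually (eventually_gt_nhds hpos)
    have hrhs : Filter.Tendsto
        (fun i => (j:ℝ)*aS (φ i)*cS (φ i) + ((j:ℝ)*aB (φ i) - (t:ℝ))*c) Filter.atTop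
        (nhds (0 + ((j:ℝ)*(y/c) - (t:ℝ))*c)) := by
      apply Filter.Tendsto.add
      · simpa [mul_assoc] using haS_tend.const_mul (j:ℝ)
      · exact hjtend.mul_const c
    have hle : y ≤ 0 + ((j:ℝ)*(y/c) - (t:ℝ))*c := by
      apply le_of_tendsto_of_tendsto hm_tend hrhs
      filter_upwards [hev] with i hi
      have := h10 (φ i) j t hj hi
      rw [hφc i] at this
      exact this
    rw [zero_add] at hle
    exact (div_le_iff₀ hcpos).2 hle
  obtain ⟨q, hq1, hqeq⟩ := dioph (div_pos hy hcpos) hH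
  apply hyD
  refine ⟨c, hcCs, q, hcpos, hq1, ?_⟩
  have hq0 : (q:ℝ) ≠ 0 := by positivity
  rw [eq_div_iff hq0]
  have hyc : y/c = 1/(q:ℝ) := hqeq
  field_simp at hyc
  linarith


/-- If `Λ ⊆ (-∞, 1]` is finite, then the accumulation points of the set of minimal log
discrepancies of surface toric pairs with boundary coefficients in `Λ` only accumulate
to zero: every accumulation point of the set of accumulation points is `0`. -/
theorem toric_surface_mld_acc_points_accumulate_to_zero
    (Λ : Set ℝ) (hΛfin : Λ.Finite) (hΛ : Λ ⊆ Set.Iic 1) :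
    ∀ x : ℝ, AccPt x (Filter.principal
      {y : ℝ | AccPt y (Filter.principal (toricSurfaceMlds Λ))}) → x = 0 := by
  classical
  intro x hx
  by_contra hx0
  set Cs : Set ℝ := (fun t => 1 - t) '' Λ with hCsdef
  have hCsfin : Cs.Finite := hΛfin.image _
  set A : Set ℝ := {y : ℝ | AccPt y (Filter.principal (toricSurfaceMlds Λ))} with hAdef
  have hacc_closure : ∀ (z : ℝ) (S : Set ℝ), AccPt z (Filter.principal S) → z ∈ closure S := by
    intro z S h
    rw [mem_closure_iff_clusterPt]
    exact Filter.NeBot.mono h (inf_le_inf_right _ nhdsWithin_le_nhds)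
  have hMnn : toricSurfaceMlds Λ ⊆ Set.Ici 0 := by
    rintro m ⟨v₁, v₂, b₁, b₂, L, hcop1, hcop2, hD, hb₁, hb₂, hL1, hL2, hmeq⟩
    have hm' : m = sInf (Sv v₁ v₂ L) := hmeq
    rw [Set.mem_Ici, hm']
    exact m_nonneg hD hL1 hL2 (hΛ hb₁) (hΛ hb₂)
  have hA_sub : A ⊆ insert 0 (Dset Cs) := by
    intro z hz
    by_cases hz0 : z = 0
    · exact Or.inl hz0
    · have hzcl : z ∈ closure (toricSurfaceMlds Λ) := hacc_closure z _ hz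
      have hz_nonneg : 0 ≤ z := closure_minimal hMnn isClosed_Ici hzcl
      have hzpos : 0 < z := lt_of_le_of_ne hz_nonneg (Ne.symm hz0)
      exact Or.inr (accPt_mem_D Λ hΛfin hΛ hzpos hz)
  have hD_Ici : Dset Cs ⊆ Set.Ici 0 := by
    rintro z ⟨cc, hcc, q, hccpos, hq1, hzeq⟩
    rw [Set.mem_Ici, hzeq]
    positivity
  have hA_Ici : A ⊆ Set.Ici 0 := by
    intro z hz
    rcases hA_sub hz with h | h
    · simp [h]
    · exact hD_Ici h
  have hxcl : x ∈ closure A := hacc_closure x A hx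
  have hx_nonneg : 0 ≤ x := closure_minimal hA_Ici isClosed_Ici hxcl
  have hxpos : 0 < x := lt_of_le_of_ne hx_nonneg (Ne.symm hx0)
  obtain ⟨Cmax, hCmax1, hCmaxub⟩ : ∃ Cmax : ℝ, 1 ≤ Cmax ∧ ∀ c ∈ Cs, c ≤ Cmax := by
    obtain ⟨B, hB⟩ := hCsfin.bddAbove
    exact ⟨max B 1, le_max_right _ _, fun c hc => le_trans (hB hc) (le_max_left _ _)⟩
  set Qx : ℕ := ⌈2*Cmax/x⌉₊ with hQxdef
  have hDfin : (Dset Cs ∩ Set.Ici (x/2)).Finite := by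
    have hsub : (Dset Cs ∩ Set.Ici (x/2)) ⊆
        (fun p : ℝ × ℕ => p.1/(p.2:ℝ)) '' (Cs ×ˢ Set.Iic Qx) := by
      rintro z ⟨⟨cc, hccCs, q, hccpos, hq1, hzeq⟩, hzge⟩
      have hzge' : x/2 ≤ z := hzge
      have hzpos' : 0 < z := lt_of_lt_of_le (by positivity) hzge'
      have hqpos : (0:ℝ) < q := by
        have : (1:ℕ) ≤ q := hq1
        exact_mod_cast this
      have hqeq : (q:ℝ) = cc / z := by
        rw [hzeq]; field_simp
      have hqle : (q:ℝ) ≤ 2*Cmax/x := by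
        rw [hqeq]
        calc cc / z ≤ Cmax / (x/2) :=
              div_le_div₀ (by linarith [hCmaxub cc hccCs]) (hCmaxub cc hccCs)
                (by positivity) hzge'
          _ = 2*Cmax/x := by field_simp
      have hqQx : q ≤ Qx := by
        have : (q:ℝ) ≤ ((Qx:ℕ):ℝ) := le_trans hqle (Nat.le_ceil _)
        exact_mod_cast this
      exact ⟨(cc, q), ⟨hccCs, hqQx⟩, hzeq.symm⟩
    exact Set.Finite.subset (Set.Finite.image _ (hCsfin.prod (Set.finite_Iic Qx))) hsub
  obtain ⟨ρ, hρ, hsep⟩ := sep_finite (hDfin.insert 0) x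
  obtain ⟨z, hz, hzne⟩ := accPt_iff_nhds.1 hx
    (Metric.ball x (min ρ (x/2))) (Metric.ball_mem_nhds x (lt_min hρ (by positivity)))
  have hdist : |z - x| < min ρ (x/2) := by
    have := Metric.mem_ball.1 hz.1
    rwa [Real.dist_eq] at this
  have hdρ : |z - x| < ρ := lt_of_lt_of_le hdist (min_le_left _ _)
  have hdx2 : |z - x| < x/2 := lt_of_lt_of_le hdist (min_le_right _ _)
  rcases hA_sub hz.2 with hz0 | hzD
  · rw [hz0] at hdx2
    rw [abs_sub_comm] at hdx2
    rw [sub_zero, abs_of_pos hxpos] at hdx2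
    linarith
  · have hzhalf : x/2 ≤ z := by
      have := (abs_lt.1 hdx2).1
      linarith
    have hzG : z ∈ insert 0 (Dset Cs ∩ Set.Ici (x/2)) := Or.inr ⟨hzD, hzhalf⟩
    exact absurd (hsep z hzG hzne) (not_le.mpr hdρ)
end

section
/- Let (x, x') be a ℤ-basis of ℤ² (i.e. |det(x, x')| = 1), and let m and c be positive coprime integers. Set y = m·x' − c·x. Then the cone in ℝ² spanned by x' and y admits a regular decomposition w₀ = x', w₁, …, w_s, w_{s+1} = y with at most c interior vectors, i.e. s ≤ c. -/
/-- The real cone spanned by the integer vectors `v` and `w`. -/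
def coneR (v w : ℤ × ℤ) : Set (ℝ × ℝ) :=
  {x | ∃ a b : ℝ, 0 ≤ a ∧ 0 ≤ b ∧ x = a • vecR v + b • vecR w}

lemma cone_split (u v w : ℤ × ℤ) (α β γ : ℝ) (hα : 0 < α) (hβ : 0 < β) (hγ : 0 < γ)
    (hv : γ • vecR v = α • vecR u + β • vecR w) (z : ℝ × ℝ) :
    z ∈ coneR u w ↔ z ∈ coneR u v ∨ z ∈ coneR v w := by
  have hv1 : γ * (vecR v).1 = α * (vecR u).1 + β * (vecR w).1 := by
    have := congrArg Prod.fst hv; simpa using this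
  have hv2 : γ * (vecR v).2 = α * (vecR u).2 + β * (vecR w).2 := by
    have := congrArg Prod.snd hv; simpa using this
  constructor
  · rintro ⟨a, b, ha, hb, rfl⟩
    rcases le_or_gt (b * α) (a * β) with h | h
    · left
      refine ⟨(a * β - b * α) / β, b * γ / β, div_nonneg (by linarith) hβ.le, by positivity, ?_⟩
      apply Prod.ext
      · simp only [Prod.fst_add, Prod.smul_fst, smul_eq_mul]
        field_simp
        linear_combination (-b) * hv1
      · simp only [Prod.snd_add, Prod.smul_snd, smul_eq_mul]
        field_simp
        linear_combination (-b) * hv2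
    · right
      refine ⟨a * γ / α, (b * α - a * β) / α, by positivity, div_nonneg (by linarith) hα.le, ?_⟩
      apply Prod.ext
      · simp only [Prod.fst_add, Prod.smul_fst, smul_eq_mul]
        field_simp
        linear_combination (-a) * hv1
      · simp only [Prod.snd_add, Prod.smul_snd, smul_eq_mul]
        field_simp
        linear_combination (-a) * hv2
  · rintro (⟨p, q, hp, hq, rfl⟩ | ⟨p, q, hp, hq, rfl⟩)
    · refine ⟨p + q * α / γ, q * β / γ, by positivity, by positivity, ?_⟩
      apply Prod.ext
      · simp only [Prod.fst_add, Prod.smul_fst, smul_eq_mul]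
        field_simp
        linear_combination q * hv1
      · simp only [Prod.snd_add, Prod.smul_snd, smul_eq_mul]
        field_simp
        linear_combination q * hv2
    · refine ⟨p * α / γ, q + p * β / γ, by positivity, by positivity, ?_⟩
      apply Prod.ext
      · simp only [Prod.fst_add, Prod.smul_fst, smul_eq_mul]
        field_simp
        linear_combination p * hv1
      · simp only [Prod.snd_add, Prod.smul_snd, smul_eq_mul]
        field_simp
        linear_combination p * hv2


lemma vecR_smul (a : ℤ) (p : ℤ × ℤ) : vecR (a • p) = (a : ℝ) • vecR p := by
  simp [vecR, Prod.ext_iff]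

lemma vecR_add (p q : ℤ × ℤ) : vecR (p + q) = vecR p + vecR q := by
  simp [vecR, Prod.ext_iff]

theorem aux : ∀ (n : ℕ) (x x' : ℤ × ℤ), |det2 x x'| = 1 → ∀ (m c : ℤ), 0 < m → 0 < c →
    c ≤ (n : ℤ) → IsCoprime m c → ∀ y : ℤ × ℤ, y = m • x' - c • x →
    ∃ s : ℕ, (s : ℤ) ≤ c ∧ ∃ w : Fin (s + 2) → ℤ × ℤ,
      w 0 = x' ∧ w (Fin.last (s + 1)) = y ∧
      (∀ i : Fin (s + 1), |det2 (w i.castSucc) (w i.succ)| = 1) ∧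
      (∀ z : ℝ × ℝ, z ∈ coneR x' y ↔
        ∃ i : Fin (s + 1), z ∈ coneR (w i.castSucc) (w i.succ)) := by
  intro n
  induction n with
  | zero => intro x x' _ m c _ hc hcn _ y _; omega
  | succ n ih =>
    intro x x' hdet m c hm hc hcn hcop y hy
    by_cases hc1 : c = 1
    · -- base case c = 1
      subst hc1
      refine ⟨0, by norm_num, ![x', y], rfl, rfl, ?_, ?_⟩
      · intro i
        fin_cases i
        have h : det2 x' y = det2 x x' := by
          simp only [hy, det2, Prod.fst_sub, Prod.snd_sub, Prod.smul_fst, Prod.smul_snd,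
            smul_eq_mul]
          ring
        simpa [h] using hdet
      · intro z
        constructor
        · intro hz; exact ⟨0, hz⟩
        · rintro ⟨i, hz⟩; fin_cases i; exact hz
    · -- inductive step
      have hc2 : 2 ≤ c := by omega
      set q : ℤ := (-m) / c with hq
      set c' : ℤ := (-m) % c with hc'
      have hqc : c * q + c' = -m := Int.mul_ediv_add_emod (-m) c
      have hc'0 : 0 ≤ c' := Int.emod_nonneg _ (by omega)
      have hc'lt : c' < c := Int.emod_lt_of_pos _ hc
      have hc'pos : 0 < c' := by
        rcases hc'0.lt_or_eq with h | h
        · exact h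
        · exfalso
          have hdvd : c ∣ m := by
            refine ⟨-q, ?_⟩
            rw [mul_neg]
            omega
          have hu : IsUnit c := hcop.isUnit_of_dvd' hdvd dvd_rfl
          rcases Int.isUnit_iff.mp hu with h1 | h1 <;> omega
      set v : ℤ × ℤ := (-q) • x' - x with hv
      have hdetv : |det2 x' v| = 1 := by
        have h : det2 x' v = det2 x x' := by
          simp only [hv, det2, Prod.fst_sub, Prod.snd_sub, Prod.smul_fst, Prod.smul_snd,
            smul_eq_mul]
          ring
        rw [h]; exact hdet
      have h1 : c * -q = m + c' := by rw [mul_neg]; omega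
      have hyv : y = c • v - c' • x' := by
        simp only [hy, hv, smul_sub, sub_sub_eq_add_sub, smul_smul, h1]
        apply Prod.ext <;>
          simp only [Prod.fst_sub, Prod.snd_sub, Prod.fst_add, Prod.snd_add, Prod.smul_fst,
            Prod.smul_snd, smul_eq_mul, add_mul] <;> ring
      have hcop' : IsCoprime c c' := by
        have hA : IsCoprime c (-m + c * -q) := (hcop.symm.neg_right).add_mul_left_right (-q)
        have hB : -m + c * -q = c' := by rw [mul_neg]; omega
        rwa [hB] at hA
      obtain ⟨s', hs', w', hw0, hwlast, hwdet, hwcone⟩ :=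
        ih x' v hdetv c c' hc hc'pos (by omega) hcop' y hyv
      have hvR : (c : ℝ) • vecR v = (c' : ℝ) • vecR x' + (1 : ℝ) • vecR y := by
        have hz : c • v = c' • x' + y := by rw [hyv]; abel
        calc (c : ℝ) • vecR v = vecR (c • v) := (vecR_smul c v).symm
          _ = vecR (c' • x' + y) := by rw [hz]
          _ = (c' : ℝ) • vecR x' + (1 : ℝ) • vecR y := by
              rw [vecR_add, vecR_smul, one_smul]
      refine ⟨s' + 1, by push_cast; omega, Fin.cons x' w', Fin.cons_zero _ _, ?_, ?_, ?_⟩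
      · have hL : Fin.last (s' + 1 + 1) = Fin.succ (Fin.last (s' + 1)) := by
          ext; simp
        rw [hL, Fin.cons_succ]
        exact hwlast
      · intro i
        refine Fin.cases ?_ ?_ i
        · have e1 : ((0 : Fin (s' + 1 + 1)).castSucc) = 0 := by ext; simp
          have e2 : ((0 : Fin (s' + 1 + 1)).succ) = Fin.succ 0 := by ext; simp
          rw [e1, e2, Fin.cons_zero, Fin.cons_succ, hw0]
          exact hdetv
        · intro j
          rw [← Fin.succ_castSucc, Fin.cons_succ, Fin.cons_succ]
          exact hwdet j
      · intro z
        have hsplit := cone_split x' v y ((c' : ℝ)) 1 ((c : ℝ))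
          (by exact_mod_cast hc'pos) one_pos (by exact_mod_cast hc) hvR z
        rw [hsplit, hwcone z]
        constructor
        · rintro (h | ⟨j, hj⟩)
          · refine ⟨0, ?_⟩
            have e1 : ((0 : Fin (s' + 1 + 1)).castSucc) = 0 := by ext; simp
            have e2 : ((0 : Fin (s' + 1 + 1)).succ) = Fin.succ 0 := by ext; simp
            rw [e1, e2, Fin.cons_zero, Fin.cons_succ, hw0]
            exact h
          · refine ⟨j.succ, ?_⟩
            rw [← Fin.succ_castSucc, Fin.cons_succ, Fin.cons_succ]
            exact hj
        · rintro ⟨i, hi⟩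
          revert hi
          refine Fin.cases ?_ ?_ i
          · intro hi
            left
            have e1 : ((0 : Fin (s' + 1 + 1)).castSucc) = 0 := by ext; simp
            have e2 : ((0 : Fin (s' + 1 + 1)).succ) = Fin.succ 0 := by ext; simp
            rwa [e1, e2, Fin.cons_zero, Fin.cons_succ, hw0] at hi
          · intro j hi
            right
            refine ⟨j, ?_⟩
            rwa [← Fin.succ_castSucc, Fin.cons_succ, Fin.cons_succ] at hi

/-- Let `(x, x')` be a ℤ-basis of `ℤ²`, and let `m, c` be positive coprime integers. Set
`y = m • x' - c • x`. Then the cone spanned by `x'` and `y` admits a regular decomposition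
`w 0 = x', w 1, …, w s, w (s+1) = y` with `s ≤ c` interior vectors. -/
theorem regular_decomposition_of_cone_bounded
    (x x' : ℤ × ℤ) (hdet : |det2 x x'| = 1)
    (m c : ℤ) (hm : 0 < m) (hc : 0 < c) (hcop : IsCoprime m c)
    (y : ℤ × ℤ) (hy : y = m • x' - c • x) :
    ∃ s : ℕ, (s : ℤ) ≤ c ∧ ∃ w : Fin (s + 2) → ℤ × ℤ,
      w 0 = x' ∧ w (Fin.last (s + 1)) = y ∧
      (∀ i : Fin (s + 1), |det2 (w i.castSucc) (w i.succ)| = 1) ∧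
      (∀ z : ℝ × ℝ, z ∈ coneR x' y ↔
        ∃ i : Fin (s + 1), z ∈ coneR (w i.castSucc) (w i.succ)) := by
  exact aux c.toNat x x' hdet m c hm hc (by omega) hcop y hy
end
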